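/- Let n ≥ 2 be an integer. For C ∈ (0, π/2) define Y_C := 2·∫_C^{π/2} ((sin z / sin C)^{2(n−1)} − 1)^{−1/2} dz. Then limsup_{C → (π/2)⁻} Y_C ≥ 2·√(2/(n−1)). -/

import Mathlib

open Real Set Filter Topology
open MeasureTheory

lemma aux_pow (m : ℕ) {t T : ℝ} (ht : 0 ≤ t) (htT : t ≤ T) :
    (1 + t) ^ m ≤ 1 + m * t * (1 + T) ^ m := by
  induction m with
  | zero => simp
  | succ k ih =>
    have hT0 : (0:ℝ) ≤ 1 + T := by linarith
    have hk0 : (0:ℝ) ≤ (1+T)^k := pow_nonneg hT0 k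
    have h1 : (1:ℝ) ≤ (1+T)^(k+1) := one_le_pow₀ (by linarith)
    have hp : (1+T)^(k+1) = (1+T)^k * (1+T) := pow_succ _ _
    calc (1+t)^(k+1) = (1+t)^k * (1+t) := pow_succ _ _
    _ ≤ (1 + k*t*(1+T)^k) * (1+t) := mul_le_mul_of_nonneg_right ih (by linarith)
    _ ≤ 1 + (↑(k+1)) * t * (1+T)^(k+1) := by
        rw [hp] at h1 ⊢
        push_cast
        nlinarith [mul_nonneg ht (sub_nonneg.2 h1),
          mul_nonneg (mul_nonneg (mul_nonneg (Nat.cast_nonneg k : (0:ℝ) ≤ k) ht) hk0) (sub_nonneg.2 htT)]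

lemma le_of_sq_le' {a b : ℝ} (hb : 0 ≤ b) (h : a^2 ≤ b^2) (ha : 0 ≤ a) : a ≤ b := by
  nlinarith

lemma eq_of_sq_eq' {a b : ℝ} (ha : 0 ≤ a) (hb : 0 ≤ b) (h : a^2 = b^2) : a = b := by
  nlinarith [le_of_sq_le' hb h.le ha, le_of_sq_le' ha h.ge hb]

set_option maxHeartbeats 800000 in
lemma base_bounds (m : ℕ) (hm1 : 1 ≤ m) {C z : ℝ} (hC1 : 0 < C) (hC2 : C < π/2)
    (hz1 : C ≤ z) (hz2 : z ≤ π/2) :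
    2 * Real.sin C * (π/2 - C) / π^2 * (z - C) ≤ (Real.sin z / Real.sin C)^(2*m) - 1 ∧
    (Real.sin z / Real.sin C)^(2*m) - 1 ≤ 2 * (m:ℝ) * (π/2 - C) / Real.sin C^(2*m+2) * (z - C) := by
  have hπ : (0:ℝ) < π := Real.pi_pos
  set s := Real.sin C with hs
  have hs0 : 0 < s := Real.sin_pos_of_pos_of_lt_pi hC1 (by linarith)
  have hs1 : s ≤ 1 := Real.sin_le_one C
  set ε := π/2 - C with hεdef
  have hε0 : 0 < ε := by simp only [hεdef]; linarith
  have hm0 : (0:ℝ) < (m:ℝ) := by exact_mod_cast Nat.pos_of_ne_zero (by omega)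
  set A := 2 * (m:ℝ) * ε / s ^ (2*m+2) with hA
  set B := 2 * s * ε / π^2 with hB
  have hApos : 0 < A := by rw [hA]; positivity
  have hBpos : 0 < B := by rw [hB]; positivity
  show B * (z - C) ≤ _ ∧ _ ≤ A * (z - C)
  have hsz : s ≤ Real.sin z :=
    Real.strictMonoOn_sin.monotoneOn ⟨by linarith, by linarith⟩ ⟨by linarith, by linarith⟩ hz1
  have hsz1 : Real.sin z ≤ 1 := Real.sin_le_one z
  have hz0 : (0:ℝ) ≤ z - C := by linarith
  set a := (π - z - C)/2 with hadef
  set b := (z - C)/2 with hbdef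
  have ha0 : 0 ≤ a := by rw [hadef]; linarith
  have ha2 : a ≤ π/2 := by rw [hadef]; linarith
  have haε : ε/2 ≤ a := by rw [hadef, hεdef]; linarith
  have haε' : a ≤ ε := by rw [hadef, hεdef]; linarith
  have hb0 : 0 ≤ b := by rw [hbdef]; linarith
  have hb2 : b ≤ π/2 := by rw [hbdef]; linarith
  have hdiff : Real.sin z - s = 2 * Real.sin a * Real.sin b := by
    have h := Real.cos_sub_cos (π/2 - z) (π/2 - C)
    rw [Real.cos_pi_div_two_sub, Real.cos_pi_div_two_sub] at h
    have e1 : (π/2 - z + (π/2 - C))/2 = a := by rw [hadef]; ring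
    have e2 : (π/2 - z - (π/2 - C))/2 = -b := by rw [hbdef]; ring
    rw [h, e1, e2, Real.sin_neg]; ring
  have hsa_low : 2/π * a ≤ Real.sin a := Real.mul_le_sin ha0 ha2
  have hsb_low : 2/π * b ≤ Real.sin b := Real.mul_le_sin hb0 hb2
  have hsa_up : Real.sin a ≤ a := Real.sin_le ha0
  have hsb_up : Real.sin b ≤ b := Real.sin_le hb0
  have hsa0 : 0 ≤ Real.sin a := le_trans (by positivity) hsa_low
  have hsb0 : 0 ≤ Real.sin b := le_trans (by positivity) hsb_low
  have p1 : ε/π ≤ Real.sin a := by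
    calc ε/π = 2/π * (ε/2) := by ring
    _ ≤ 2/π * a := by gcongr
    _ ≤ Real.sin a := hsa_low
  have p2 : (z - C)/π ≤ Real.sin b := by
    calc (z-C)/π = 2/π * ((z-C)/2) := by ring
    _ = 2/π * b := by rw [hbdef]
    _ ≤ Real.sin b := hsb_low
  have hdl : 2*ε*(z-C)/π^2 ≤ Real.sin z - s := by
    rw [hdiff]
    have q := mul_le_mul p1 p2 (by positivity) hsa0
    calc 2*ε*(z-C)/π^2 = 2 * (ε/π * ((z-C)/π)) := by field_simp
    _ ≤ 2 * (Real.sin a * Real.sin b) := by linarith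
    _ = 2 * Real.sin a * Real.sin b := by ring
  have hdu : Real.sin z - s ≤ ε * (z - C) := by
    rw [hdiff]
    have q := mul_le_mul hsa_up hsb_up hsb0 ha0
    have q2 : a * b ≤ ε * b := mul_le_mul_of_nonneg_right haε' hb0
    calc 2 * Real.sin a * Real.sin b = 2*(Real.sin a * Real.sin b) := by ring
    _ ≤ 2*(a*b) := by linarith
    _ ≤ 2*(ε*b) := by linarith
    _ = ε*(z-C) := by rw [hbdef]; ring
  have hsinz0 : 0 ≤ Real.sin z := le_trans hs0.le hsz
  have hsq_low : B * (z - C) ≤ Real.sin z^2 - s^2 := by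
    have q := mul_le_mul hdl (show s ≤ Real.sin z + s by linarith) hs0.le (by linarith)
    calc B * (z - C) = 2*ε*(z-C)/π^2 * s := by rw [hB]; ring
    _ ≤ (Real.sin z - s) * (Real.sin z + s) := q
    _ = Real.sin z^2 - s^2 := by ring
  have hsq_up : Real.sin z^2 - s^2 ≤ 2*ε*(z-C) := by
    have q := mul_le_mul hdu (show Real.sin z + s ≤ 2 by linarith) (by linarith)
      (mul_nonneg hε0.le hz0)
    calc Real.sin z^2 - s^2 = (Real.sin z - s) * (Real.sin z + s) := by ring
    _ ≤ ε * (z - C) * 2 := q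
    _ = 2*ε*(z-C) := by ring
  -- base sandwich
  have hr1 : 1 ≤ Real.sin z / s := (one_le_div hs0).2 hsz
  have hr2 : (1:ℝ) ≤ (Real.sin z/s)^2 := one_le_pow₀ hr1
  have hpow_mul : (Real.sin z/s)^(2*m) = ((Real.sin z/s)^2)^m := by rw [← pow_mul]
  have ht_eq : (Real.sin z/s)^2 = 1 + (Real.sin z^2 - s^2)/s^2 := by
    field_simp
    ring
  have hnum0 : 0 ≤ Real.sin z^2 - s^2 := le_trans (by positivity) hsq_low
  constructor
  · -- lower bound
    have l1 : (Real.sin z/s)^2 ≤ ((Real.sin z/s)^2)^m := le_self_pow₀ hr2 (by omega)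
    have l2 : Real.sin z^2 - s^2 ≤ (Real.sin z/s)^2 - 1 := by
      rw [ht_eq]
      have : Real.sin z^2 - s^2 ≤ (Real.sin z^2 - s^2)/s^2 := by
        rw [le_div_iff₀ (by positivity)]
        nlinarith [mul_nonneg hnum0 (show (0:ℝ) ≤ 1 - s^2 by nlinarith)]
      linarith
    rw [hpow_mul]
    linarith
  · -- upper bound
    have ht0 : 0 ≤ (Real.sin z^2 - s^2)/s^2 := by positivity
    have htT : (Real.sin z^2 - s^2)/s^2 ≤ (1 - s^2)/s^2 := by
      gcongr
      nlinarith
    have haux := aux_pow m ht0 htT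
    have hT_eq : 1 + (1 - s^2)/s^2 = 1/s^2 := by field_simp; ring
    rw [hT_eq] at haux
    have hPm : (1/s^2)^m = 1/s^(2*m) := by
      rw [div_pow, one_pow, ← pow_mul]
    rw [hPm] at haux
    have ht_le : (Real.sin z^2 - s^2)/s^2 ≤ 2*ε*(z-C)/s^2 := by gcongr
    have hfin : (m:ℝ) * (2*ε*(z-C)/s^2) * (1/s^(2*m)) = A * (z - C) := by
      rw [hA]
      field_simp
      ring
    rw [hpow_mul, ht_eq]
    have step : (m:ℝ) * ((Real.sin z^2 - s^2)/s^2) * (1/s^(2*m)) ≤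
        (m:ℝ) * (2*ε*(z-C)/s^2) * (1/s^(2*m)) := by
      gcongr
    linarith [haux, step, hfin.le, hfin.ge]


set_option maxHeartbeats 1000000 in
lemma perC (n : ℕ) (hn : 2 ≤ n) {C : ℝ} (hC1 : 0 < C) (hC2 : C < π/2) :
    (2 * Real.sqrt (2 / ((n:ℝ) - 1)) * Real.sin C ^ (n - 1 + 1) ≤
      2 * ∫ z in C..(π/2), ((Real.sin z / Real.sin C) ^ (2*(n-1)) - 1) ^ (-(1:ℝ)/2)) ∧
    (1/2 ≤ Real.sin C →
      2 * ∫ z in C..(π/2), ((Real.sin z / Real.sin C) ^ (2*(n-1)) - 1) ^ (-(1:ℝ)/2) ≤ 4 * π) := by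
  have hπ : (0:ℝ) < π := Real.pi_pos
  have hs0 : 0 < Real.sin C := Real.sin_pos_of_pos_of_lt_pi hC1 (by linarith)
  have hs1 : Real.sin C ≤ 1 := Real.sin_le_one C
  have hε0 : 0 < π/2 - C := by linarith
  have hm1 : 1 ≤ n - 1 := by omega
  have hm0 : (0:ℝ) < ((n-1 : ℕ):ℝ) := by exact_mod_cast Nat.pos_of_ne_zero (by omega)
  have base := fun z hz1 hz2 => base_bounds (n-1) hm1 hC1 hC2 (z := z) hz1 hz2
  have hCle : C ≤ π/2 := hC2.le
  set s := Real.sin C with hs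
  set ε := π/2 - C with hεdef
  set m := n - 1 with hmdef
  set A := 2 * (m:ℝ) * ε / s ^ (2*m+2) with hA
  set B := 2 * s * ε / π^2 with hB
  have hApos : 0 < A := by rw [hA]; positivity
  have hBpos : 0 < B := by rw [hB]; positivity
  set G := fun z : ℝ => ((Real.sin z / s) ^ (2*m) - 1) ^ (-(1:ℝ)/2) with hG
  set HA := fun z : ℝ => A ^ (-(1:ℝ)/2) * (z - C) ^ (-(1:ℝ)/2) with hHA
  set HB := fun z : ℝ => B ^ (-(1:ℝ)/2) * (z - C) ^ (-(1:ℝ)/2) with hHB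
  -- pointwise integrand comparisons on Icc
  have hGC : G C = 0 := by
    rw [hG]
    simp only [← hs, div_self hs0.ne']
    rw [one_pow, sub_self, Real.zero_rpow (by norm_num)]
  have hG0 : ∀ z ∈ Icc C (π/2), 0 ≤ G z := by
    intro z hz
    have hb := (base z hz.1 hz.2).1
    have hnn : 0 ≤ B * (z - C) := mul_nonneg hBpos.le (sub_nonneg.2 hz.1)
    exact Real.rpow_nonneg (by linarith) _
  have hptA : ∀ z ∈ Icc C (π/2), HA z ≤ G z := by
    intro z hz
    rcases eq_or_lt_of_le hz.1 with h | h
    · subst h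
      rw [hHA]
      simp only [sub_self]
      rw [Real.zero_rpow (by norm_num), mul_zero, hGC]
    · have hzC : 0 < z - C := by linarith
      have hb := base z hz.1 hz.2
      have hXpos : 0 < (Real.sin z / s) ^ (2*m) - 1 :=
        lt_of_lt_of_le (by positivity) hb.1
      have key : (A * (z - C)) ^ (-(1:ℝ)/2) ≤ ((Real.sin z / s) ^ (2*m) - 1) ^ (-(1:ℝ)/2) :=
        Real.rpow_le_rpow_of_nonpos hXpos hb.2 (by norm_num)
      rw [Real.mul_rpow hApos.le hzC.le] at key
      exact key
  have hptB : ∀ z ∈ Icc C (π/2), G z ≤ HB z := by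
    intro z hz
    rcases eq_or_lt_of_le hz.1 with h | h
    · subst h
      rw [hHB]
      simp only [sub_self]
      rw [Real.zero_rpow (by norm_num), mul_zero, hGC]
    · have hzC : 0 < z - C := by linarith
      have hb := base z hz.1 hz.2
      have hBzpos : 0 < B * (z - C) := by positivity
      have key : ((Real.sin z / s) ^ (2*m) - 1) ^ (-(1:ℝ)/2) ≤ (B * (z - C)) ^ (-(1:ℝ)/2) :=
        Real.rpow_le_rpow_of_nonpos hBzpos hb.1 (by norm_num)
      rw [Real.mul_rpow hBpos.le hzC.le] at key
      exact key
  -- integrability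
  have hpow_int : IntervalIntegrable (fun z : ℝ => (z - C) ^ (-(1:ℝ)/2)) volume C (π/2) := by
    have h0 := (intervalIntegral.intervalIntegrable_rpow' (a := 0) (b := π/2 - C)
      (r := -(1:ℝ)/2) (by norm_num)).comp_sub_right C
    simpa using h0
  have hHA_int : IntervalIntegrable HA volume C (π/2) := hpow_int.const_mul _
  have hHB_int : IntervalIntegrable HB volume C (π/2) := hpow_int.const_mul _
  have hG_meas : MeasureTheory.AEStronglyMeasurable G
      (volume.restrict (Set.uIoc C (π/2))) := by
    rw [uIoc_of_le hCle]
    refine ContinuousOn.aestronglyMeasurable ?_ measurableSet_Ioc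
    refine ContinuousOn.rpow_const ?_ ?_
    · exact (((Real.continuous_sin.div_const s).pow (2*m)).sub continuous_const).continuousOn
    · intro z hz
      have hb := (base z hz.1.le hz.2).1
      have hzC : 0 < z - C := by linarith [hz.1]
      have hBpos' : 0 < B * (z - C) := by positivity
      exact Or.inl (lt_of_lt_of_le hBpos' hb).ne'
  have hG_int : IntervalIntegrable G volume C (π/2) := by
    refine hHB_int.mono_fun' hG_meas ?_
    rw [uIoc_of_le hCle]
    filter_upwards [MeasureTheory.ae_restrict_mem measurableSet_Ioc] with z hz
    have hz' : z ∈ Icc C (π/2) := ⟨hz.1.le, hz.2⟩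
    rw [Real.norm_eq_abs, abs_of_nonneg (hG0 z hz')]
    exact hptB z hz'
  -- integral values
  have hval : ∫ z in C..(π/2), (z - C) ^ (-(1:ℝ)/2) = 2 * Real.sqrt ε := by
    rw [intervalIntegral.integral_comp_sub_right (fun x => x ^ (-(1:ℝ)/2)) C]
    rw [integral_rpow (Or.inl (by norm_num))]
    rw [sub_self]
    rw [Real.zero_rpow (by norm_num), Real.sqrt_eq_rpow]
    norm_num
    rw [← hεdef]
    ring
  have hIA : ∫ z in C..(π/2), HA z = A ^ (-(1:ℝ)/2) * (2 * Real.sqrt ε) := by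
    rw [hHA, intervalIntegral.integral_const_mul, hval]
  have hIB : ∫ z in C..(π/2), HB z = B ^ (-(1:ℝ)/2) * (2 * Real.sqrt ε) := by
    rw [hHB, intervalIntegral.integral_const_mul, hval]
  have hlow : (∫ z in C..(π/2), HA z) ≤ ∫ z in C..(π/2), G z :=
    intervalIntegral.integral_mono_on hCle hHA_int hG_int hptA
  have hup : (∫ z in C..(π/2), G z) ≤ ∫ z in C..(π/2), HB z :=
    intervalIntegral.integral_mono_on hCle hG_int hHB_int hptB
  have hcast : ((m:ℕ):ℝ) = (n:ℝ) - 1 := by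
    rw [hmdef, Nat.cast_sub (by omega)]; norm_num
  constructor
  · -- main lower bound
    have heq : 2 * Real.sqrt (2 / ((n:ℝ) - 1)) * s ^ (m+1)
        = 2 * (A ^ (-(1:ℝ)/2) * (2 * Real.sqrt ε)) := by
      have eA : A ^ (-(1:ℝ)/2) = (Real.sqrt A)⁻¹ := by
        rw [show (-(1:ℝ)/2) = -(1/2 : ℝ) by norm_num, Real.rpow_neg hApos.le,
          Real.sqrt_eq_rpow]
      rw [eA]
      apply eq_of_sq_eq'
      · positivity
      · positivity
      · have h1 : Real.sqrt (2 / ((n:ℝ) - 1)) ^ 2 = 2 / ((n:ℝ) - 1) :=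
          Real.sq_sqrt (by rw [← hcast]; positivity)
        have h2 : Real.sqrt ε ^ 2 = ε := Real.sq_sqrt hε0.le
        have h3 : Real.sqrt A ^ 2 = A := Real.sq_sqrt hApos.le
        have hsm : (s ^ (m+1))^2 = s ^ (2*m+2) := by rw [← pow_mul]; congr 1; omega
        have e1 : (2 * Real.sqrt (2/((n:ℝ)-1)) * s^(m+1))^2
            = 4 * (2/((n:ℝ)-1)) * s^(2*m+2) := by
          calc (2 * Real.sqrt (2/((n:ℝ)-1)) * s^(m+1))^2
              = 4 * (Real.sqrt (2/((n:ℝ)-1))^2) * ((s^(m+1))^2) := by ring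
          _ = 4 * (2/((n:ℝ)-1)) * s^(2*m+2) := by rw [h1, hsm]
        have e2 : (2 * ((Real.sqrt A)⁻¹ * (2*Real.sqrt ε)))^2 = 16 * ε / A := by
          calc (2 * ((Real.sqrt A)⁻¹ * (2*Real.sqrt ε)))^2
              = 16 * (Real.sqrt ε^2) * ((Real.sqrt A^2)⁻¹) := by ring
          _ = 16 * ε / A := by rw [h2, h3]; ring
        rw [e1, e2, ← hcast, hA]
        have hsne : s ^ (2*m+2) ≠ 0 := by positivity
        field_simp
        ring
    have hfin : 2 * (A ^ (-(1:ℝ)/2) * (2 * Real.sqrt ε)) ≤ 2 * ∫ z in C..(π/2), G z := by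
      rw [← hIA]; linarith
    calc 2 * Real.sqrt (2 / ((n:ℝ) - 1)) * s ^ (m+1)
        = 2 * (A ^ (-(1:ℝ)/2) * (2 * Real.sqrt ε)) := heq
    _ ≤ 2 * ∫ z in C..(π/2), G z := hfin
  · -- upper bound
    intro hhalf
    have eB : B ^ (-(1:ℝ)/2) = (Real.sqrt B)⁻¹ := by
      rw [show (-(1:ℝ)/2) = -(1/2 : ℝ) by norm_num, Real.rpow_neg hBpos.le,
        Real.sqrt_eq_rpow]
    have hup2 : 2 * (∫ z in C..(π/2), G z) ≤ 2 * (B ^ (-(1:ℝ)/2) * (2 * Real.sqrt ε)) := by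
      rw [← hIB]; linarith
    refine le_trans hup2 ?_
    rw [eB]
    apply le_of_sq_le' (by positivity)
    · have h2 : Real.sqrt ε ^ 2 = ε := Real.sq_sqrt hε0.le
      have h3 : Real.sqrt B ^ 2 = B := Real.sq_sqrt hBpos.le
      have e2 : (2 * ((Real.sqrt B)⁻¹ * (2*Real.sqrt ε)))^2 = 16 * ε / B := by
        calc (2 * ((Real.sqrt B)⁻¹ * (2*Real.sqrt ε)))^2
            = 16 * (Real.sqrt ε^2) * ((Real.sqrt B^2)⁻¹) := by ring
        _ = 16 * ε / B := by rw [h2, h3]; ring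
      rw [e2, hB]
      have hrw : 16*ε/(2*s*ε/π^2) = 8*π^2/s := by
        field_simp
        ring
      rw [hrw, div_le_iff₀ hs0]
      nlinarith [mul_nonneg (sq_nonneg π) (by linarith : (0:ℝ) ≤ 2*s - 1)]
    · positivity

/-- `limsup_{C → (π/2)⁻} Y_C ≥ 2√(2/(n−1))`, where
`Y_C = 2∫_C^{π/2} ((sin z/sin C)^{2(n−1)} − 1)^{−1/2} dz` is the half-period of the
spherical catenoid. -/
theorem spherical_catenoid_halfperiod_limsup_lower
    (n : ℕ) (hn : 2 ≤ n) :
    2 * Real.sqrt (2 / ((n : ℝ) - 1)) ≤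
      Filter.limsup
        (fun C : ℝ => 2 * ∫ z in C..(π / 2),
          ((Real.sin z / Real.sin C) ^ (2 * (n - 1)) - 1) ^ (-(1 : ℝ) / 2))
        (𝓝[<] (π / 2)) := by
  have hπ : (0:ℝ) < π := Real.pi_pos
  set F : ℝ → ℝ := fun C : ℝ => 2 * ∫ z in C..(π / 2),
      ((Real.sin z / Real.sin C) ^ (2 * (n - 1)) - 1) ^ (-(1 : ℝ) / 2) with hF
  set L : ℝ := 2 * Real.sqrt (2 / ((n : ℝ) - 1)) with hL
  set g : ℝ → ℝ := fun C : ℝ => L * Real.sin C ^ (n - 1 + 1) with hg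
  have hg_t : Tendsto g (𝓝[<] (π/2)) (𝓝 L) := by
    have hc : Continuous g := continuous_const.mul (Real.continuous_sin.pow _)
    have h0 := (hc.tendsto (π/2)).mono_left (nhdsWithin_le_nhds (s := Iio (π/2)))
    simpa [hg, Real.sin_pi_div_two] using h0
  have hev : ∀ᶠ C in 𝓝[<] (π/2), g C ≤ F C := by
    filter_upwards [Ioo_mem_nhdsLT_of_mem
      (show (π/2 : ℝ) ∈ Ioc 0 (π/2) from ⟨by positivity, le_rfl⟩)] with C hC
    exact (perC n hn hC.1 hC.2).1
  have hbd : IsBoundedUnder (· ≤ ·) (𝓝[<] (π/2)) F := by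
    refine ⟨4*π, ?_⟩
    rw [eventually_map]
    filter_upwards [Ioo_mem_nhdsLT_of_mem
      (show (π/2 : ℝ) ∈ Ioc (π/6) (π/2) from ⟨by linarith, le_rfl⟩)] with C hC
    have hC0 : 0 < C := lt_trans (by positivity) hC.1
    have hhalf : 1/2 ≤ Real.sin C := by
      have := Real.strictMonoOn_sin.monotoneOn
        (show π/6 ∈ Icc (-(π/2)) (π/2) from ⟨by linarith, by linarith⟩)
        (show C ∈ Icc (-(π/2)) (π/2) from ⟨by linarith, hC.2.le⟩) hC.1.le
      rwa [Real.sin_pi_div_six] at this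
    exact (perC n hn hC0 hC.2).2 hhalf
  have hco : IsCoboundedUnder (· ≤ ·) (𝓝[<] (π/2)) g :=
    hg_t.isBoundedUnder_ge.isCoboundedUnder_le
  calc L = limsup g (𝓝[<] (π/2)) := (hg_t.limsup_eq).symm
  _ ≤ limsup F (𝓝[<] (π/2)) := limsup_le_limsup hev hco hbd
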